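/- Let q be even, x, y ∈ 𝔽_{q²} with x^q y + y^q x ≠ 0, and ζ₁,…,ζ₄ ∈ 𝔽_qˣ pairwise distinct (requires q > 4). For i ∈ {1,…,4}, define r_i as the 4×4 upper unitriangular matrix with (1,2)-entry xζᵢ⁻¹, (1,3)-entry yζᵢ, (1,4)-entry xy^q, (2,4)-entry y^qζᵢ, (3,4)-entry x^qζᵢ⁻¹, other off-diagonal entries 0. Then r_i r_j = r_j r_i if and only if i = j. -/

import Mathlib

open Matrix

theorem stmt16 (m q : ℕ) (hq : q = 2 ^ m) (hm : 0 < m) (K : Type*) [Field K]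
    [Fintype K] [CharP K 2] (hK : Fintype.card K = q ^ 2)
    (x y : K) (hxy : x ^ q * y + y ^ q * x ≠ 0)
    (ζ : Fin 4 → K) (hζ0 : ∀ i, ζ i ≠ 0) (hζq : ∀ i, ζ i ^ q = ζ i)
    (hinj : Function.Injective ζ) :
    let r : Fin 4 → Matrix (Fin 4) (Fin 4) K := fun i =>
      !![1, x * (ζ i)⁻¹, y * ζ i, x * y ^ q;
         0, 1, 0, y ^ q * ζ i;
         0, 0, 1, x ^ q * (ζ i)⁻¹;
         0, 0, 0, 1]
    ∀ i j : Fin 4, r i * r j = r j * r i ↔ i = j := by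
  intro r i j
  have h2 : (2:K) = 0 := by
    have := CharP.cast_eq_zero K 2; exact_mod_cast this
  constructor
  · intro h
    have e := congrFun (congrFun h 0) 3
    simp only [r, Matrix.mul_apply, Fin.sum_univ_four] at e
    simp at e
    apply hinj
    have hi := hζ0 i
    have hj := hζ0 j
    have key : (x ^ q * y + y ^ q * x) * ((ζ i ^ 2 + ζ j ^ 2) * (ζ i * ζ j)) = 0 := by
      have e2 := congrArg (fun z => z * (ζ i * ζ j)) e
      field_simp at e2
      ring_nf at e2
      linear_combination (-(ζ i * ζ j)) * e2 + (x * y ^ q * ζ i * ζ j ^ 3 + x ^ q * y * ζ i ^ 3 * ζ j) * h2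
    rcases mul_eq_zero.mp key with h1 | h1
    · exact absurd h1 hxy
    rcases mul_eq_zero.mp h1 with h1 | h1
    · have hsq : (ζ i + ζ j) ^ 2 = 0 := by
        linear_combination h1 + ζ i * ζ j * h2
      have hsum := pow_eq_zero_iff (n := 2) (by norm_num) |>.mp hsq
      linear_combination hsum - h2 * ζ j
    · rcases mul_eq_zero.mp h1 with h1 | h1
      · exact absurd h1 hi
      · exact absurd h1 hj
  · rintro rfl; rfl
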